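/- Let G be a nilpotent group, π a set of primes, and N a normal subgroup of G. Then the quotient G/I_π(N) is π-torsion-free, where I_π(N) is the π-isolator of N in G. -/
import Mathlib


def IsPiNumber (π : Set ℕ) (n : ℕ) : Prop :=
  0 < n ∧ ∀ p : ℕ, p.Prime → p ∣ n → p ∈ π

theorem quotient_by_isolator_pi_torsion_free (G : Type*) [Group G] [Group.IsNilpotent G]
    (π : Set ℕ) (N : Subgroup G) (hN : N.Normal) (K : Subgroup G) (hKn : K.Normal)
    (hK : (K : Set G) = {g : G | ∃ n : ℕ, IsPiNumber π n ∧ g ^ n ∈ N}) :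
    ∀ q : G ⧸ K, ∀ n : ℕ, IsPiNumber π n → q ^ n = 1 → q = 1 := by
  intro q n hn hqn
  obtain ⟨g, rfl⟩ := QuotientGroup.mk_surjective q
  have hgn : g ^ n ∈ K := by
    rw [← QuotientGroup.eq_one_iff]
    simpa using hqn
  have : g ^ n ∈ ({g : G | ∃ n : ℕ, IsPiNumber π n ∧ g ^ n ∈ N} : Set G) := hK ▸ hgn
  obtain ⟨m, hm, hgm⟩ := this
  have hgK : g ∈ K := by
    have : g ∈ ({g : G | ∃ n : ℕ, IsPiNumber π n ∧ g ^ n ∈ N} : Set G) := by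
      refine ⟨n * m, ⟨Nat.mul_pos hn.1 hm.1, ?_⟩, by rwa [pow_mul]⟩
      intro p hp hpd
      rcases (Nat.Prime.dvd_mul hp).mp hpd with h | h
      · exact hn.2 p hp h
      · exact hm.2 p hp h
    rw [← SetLike.mem_coe, hK]
    exact this
  rwa [QuotientGroup.eq_one_iff]
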